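/- Let ℓ > 1 be a real number. Then for every ε > 0 and every real x ≥ 0, one has (x+1)^ℓ ≤ (1+ε)·x^ℓ + C_ε, where C_ε := (1+ε)·((1+ε)^{1/(ℓ-1)} − 1)^{−(ℓ-1)}. -/

import Mathlib

theorem stmt0 (ℓ ε x : ℝ) (hℓ : 1 < ℓ) (hε : 0 < ε) (hx : 0 ≤ x) :
    (x + 1) ^ ℓ ≤ (1 + ε) * x ^ ℓ +
      (1 + ε) * ((1 + ε) ^ (1 / (ℓ - 1)) - 1) ^ (-(ℓ - 1)) := by
  set A : ℝ := (1 + ε) ^ (1 / (ℓ - 1)) with hAdef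
  have hA1 : 1 < A := by
    rw [hAdef, Real.one_lt_rpow_iff_of_pos (by linarith)]
    left
    constructor
    · linarith
    · exact div_pos one_pos (by linarith)
  have hApos : 0 < A := by linarith
  set d : ℝ := A - 1 with hddef
  have hd : 0 < d := by simp [hddef]; linarith
  have hAe : A ^ (ℓ - 1) = 1 + ε := by
    rw [hAdef, ← Real.rpow_mul (by linarith : (0:ℝ) ≤ 1 + ε),
      one_div_mul_cancel (by linarith : ℓ - 1 ≠ 0), Real.rpow_one]
  have key := (convexOn_rpow hℓ.le).2 (Set.mem_Ici.mpr (by positivity : (0:ℝ) ≤ A * x))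
    (Set.mem_Ici.mpr (by positivity : (0:ℝ) ≤ A / d))
    (by positivity : (0:ℝ) ≤ 1 / A) (by positivity : (0:ℝ) ≤ d / A)
    (by field_simp; rw [hddef]; ring)
  simp only [smul_eq_mul] at key
  have h1 : (1 / A) * (A * x) + (d / A) * (A / d) = x + 1 := by
    field_simp
  rw [h1] at key
  have h2 : (1 / A) * (A * x) ^ ℓ = (1 + ε) * x ^ ℓ := by
    rw [Real.mul_rpow hApos.le hx, ← hAe, Real.rpow_sub hApos, Real.rpow_one]
    ring
  have h3 : (d / A) * (A / d) ^ ℓ = (1 + ε) * d ^ (-(ℓ - 1)) := by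
    rw [Real.div_rpow hApos.le hd.le, ← hAe, Real.rpow_sub hApos,
      neg_sub, Real.rpow_sub hd, Real.rpow_one, Real.rpow_one]
    have hAl : (0:ℝ) < A ^ ℓ := Real.rpow_pos_of_pos hApos ℓ
    have hdl : (0:ℝ) < d ^ ℓ := Real.rpow_pos_of_pos hd ℓ
    field_simp
  rw [h2, h3] at key
  exact key
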